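/- Let G be a simple graph whose edge set E has exactly m edges, with m ≥ 2, and containing no cycle of length ≤ ℓ. Let p ∈ [0,1] satisfy p^ℓ = 1/m^{100}, and let C be a cycle of G of length k with ℓ < k ≤ 1.01·ℓ. Form a random subset E' ⊆ E by keeping each edge independently with probability p. Then the probability that C is the unique surviving cycle (every edge of C lies in E', and every other cycle of G has some edge outside E') is at least 1/(2·m^{101}). -/

import Mathlib

/-- A finset of edges `C` is (the edge set of) a cycle of the simple graph `G`. -/
def IsCycleSet {V : Type*} [DecidableEq V] (G : SimpleGraph V) (C : Finset (Sym2 V)) : Prop :=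
  ∃ (u : V) (w : G.Walk u u), w.IsCycle ∧ C = w.edges.toFinset

/-- The probability, under the product Bernoulli(p) measure on subsets of the finite set `E`
(each element kept independently with probability `p`), of the event `A`. -/
noncomputable def bernoulliSubsetProb {α : Type*} [DecidableEq α] (E : Finset α) (p : ℝ)
    (A : Set (Finset α)) : ℝ :=
  ∑ S ∈ E.powerset,
    Set.indicator A (fun S => p ^ S.card * (1 - p) ^ (E.card - S.card)) S

open SimpleGraph Finset
open scoped symmDiff

set_option linter.unusedSectionVars false
set_option linter.unusedVariables false
set_option maxHeartbeats 1000000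

section helpers

variable {V : Type*} [DecidableEq V] {G : SimpleGraph V}

lemma walk_edge_parity {u v : V} (w : G.Walk u v) (x : V) :
    (w.edges.filter (fun e => x ∈ e)).length % 2
      = ((if x = u then 1 else 0) + (if x = v then 1 else 0)) % 2 := by
  induction w with
  | @nil a => by_cases hx : x = a <;> simp [hx]
  | @cons a b c h p ih =>
    have hab : a ≠ b := h.ne
    have key : ((Walk.cons h p).edges.filter (fun e => x ∈ e)).length
        = ((if x ∈ (s(a,b) : Sym2 V) then 1 else 0)
            + (p.edges.filter (fun e => x ∈ e)).length) := by
      rw [Walk.edges_cons, List.filter_cons]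
      by_cases hx : x ∈ (s(a,b) : Sym2 V) <;> simp [hx] <;> omega
    rw [key]
    by_cases hxa : x = a <;> by_cases hxb : x = b
    · exact absurd (hxa.symm.trans hxb) hab
    · subst hxa
      rw [if_pos (Sym2.mem_mk_left x b), if_pos rfl]
      rw [if_neg hxb] at ih
      omega
    · subst hxb
      rw [if_pos (Sym2.mem_mk_right a x), if_neg hxa]
      rw [if_pos rfl] at ih
      omega
    · have hx : ¬ x ∈ (s(a,b) : Sym2 V) := fun h' => (Sym2.mem_iff.mp h').elim hxa hxb
      rw [if_neg hx, if_neg hxa]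
      rw [if_neg hxb] at ih
      omega

/-- degree of x in a finset of edges -/
def sdeg (x : V) (D : Finset (Sym2 V)) : ℕ := (D.filter (fun e => x ∈ e)).card

lemma trail_sdeg_parity {u v : V} {w : G.Walk u v} (hw : w.IsTrail) (x : V) :
    sdeg x w.edges.toFinset % 2
      = ((if x = u then 1 else 0) + (if x = v then 1 else 0)) % 2 := by
  have h1 : w.edges.toFinset.filter (fun e => x ∈ e)
      = (w.edges.filter (fun e => x ∈ e)).toFinset := by
    rw [List.toFinset_filter]
    simp
  have h2 : (w.edges.filter (fun e => x ∈ e)).toFinset.card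
      = (w.edges.filter (fun e => x ∈ e)).length :=
    List.toFinset_card_of_nodup (hw.edges_nodup.filter _)
  rw [sdeg, h1, h2, walk_edge_parity]


lemma path_start_edge_unique {a b : V} {q : G.Walk a b} (hq : q.IsPath) :
    ∀ e₁ ∈ q.edges, ∀ e₂ ∈ q.edges, a ∈ e₁ → a ∈ e₂ → e₁ = e₂ := by
  cases q with
  | nil => simp
  | @cons a c b h p =>
    intro e₁ he₁ e₂ he₂ ha₁ ha₂
    rw [Walk.edges_cons, List.mem_cons] at he₁ he₂
    have hps : a ∉ p.support := ((Walk.cons_isPath_iff h p).mp hq).2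
    have key : ∀ e ∈ p.edges, a ∉ e := by
      intro e he hae
      obtain ⟨y, rfl⟩ := Sym2.mem_iff_exists.mp hae
      exact hps (p.fst_mem_support_of_mem_edges he)
    rcases he₁ with rfl | h1
    · rcases he₂ with rfl | h2
      · rfl
      · exact absurd ha₂ (key _ h2)
    · exact absurd ha₁ (key _ h1)

lemma exists_cycleSet_subset_of_even [Fintype V] {D : Finset (Sym2 V)}
    (hD : (↑D : Set (Sym2 V)) ⊆ G.edgeSet) (hne : D.Nonempty) (heven : ∀ x, sdeg x D % 2 = 0) :
    ∃ C₀ : Finset (Sym2 V), IsCycleSet G C₀ ∧ C₀ ⊆ D := by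
  classical
  set G' : SimpleGraph V := SimpleGraph.fromEdgeSet ↑D with hG'
  have hsub : (↑D : Set (Sym2 V)) ⊆ G.edgeSet := hD
  have hedges' : ∀ e, e ∈ G'.edgeSet → e ∈ D := by
    intro e he
    rw [hG', edgeSet_fromEdgeSet] at he
    exact he.1
  have hD_to_adj : ∀ {x y : V}, s(x, y) ∈ D → G'.Adj x y := by
    intro x y hxy
    have hne' : x ≠ y := by
      intro h
      exact (G.not_isDiag_of_mem_edgeSet (hsub hxy)) (by simp [h])
    exact (SimpleGraph.fromEdgeSet_adj _).mpr ⟨hxy, hne'⟩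
  -- the set of path lengths
  let P : Set ℕ := {n | ∃ (x y : V) (q : G'.Walk x y), q.IsPath ∧ q.length = n}
  obtain ⟨e, he⟩ := hne
  induction e using Sym2.ind with
  | _ x0 y0 =>
  have hadj0 : G'.Adj x0 y0 := hD_to_adj he
  have h1P : (1 : ℕ) ∈ P := by
    refine ⟨x0, y0, Walk.cons hadj0 Walk.nil, ?_, by simp⟩
    rw [Walk.cons_isPath_iff]
    exact ⟨Walk.IsPath.nil, by simp [hadj0.ne]⟩
  have hbdd : BddAbove P := by
    refine ⟨Fintype.card V, ?_⟩
    rintro n ⟨x, y, q, hq, rfl⟩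
    exact hq.length_lt.le
  have hPne : P.Nonempty := ⟨1, h1P⟩
  have hmem := Nat.sSup_mem hPne hbdd
  set n := sSup P with hn
  have hmax : ∀ k ∈ P, k ≤ n := fun k hk => le_csSup hbdd hk
  obtain ⟨x, y, q, hq, hlen⟩ := hmem
  have h1n : 1 ≤ n := hmax 1 h1P
  -- q.reverse is not nil
  have hqrev_nonnil : ¬ q.reverse.Nil := by
    rw [Walk.not_nil_iff_lt_length, Walk.length_reverse]
    omega
  obtain ⟨x', hadj', p', hp'eq⟩ := Walk.not_nil_iff.mp hqrev_nonnil
  have he₀ : s(y, x') ∈ q.edges := by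
    have : s(y, x') ∈ q.reverse.edges := by rw [hp'eq]; simp
    rwa [Walk.edges_reverse, List.mem_reverse] at this
  have he₀D : s(y, x') ∈ D := hedges' _ (q.edges_subset_edgeSet he₀)
  -- all edges of q containing y equal s(y,x')
  have huniq : ∀ e ∈ q.edges, y ∈ e → e = s(y, x') := by
    intro e heq hye
    have h1 : e ∈ q.reverse.edges := by rw [Walk.edges_reverse, List.mem_reverse]; exact heq
    have h2 : s(y, x') ∈ q.reverse.edges := by rw [hp'eq]; simp
    exact path_start_edge_unique hq.reverse e h1 _ h2 hye (by simp)
  -- sdeg y D ≥ 2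
  have hd1 : 1 ≤ sdeg y D := by
    rw [sdeg]
    exact Finset.card_pos.mpr ⟨s(y, x'), Finset.mem_filter.mpr ⟨he₀D, by simp⟩⟩
  have hd2 : 2 ≤ sdeg y D := by have := heven y; omega
  -- find an edge at y not in q
  have hnew : ∃ e ∈ D, y ∈ e ∧ e ∉ q.edges := by
    by_contra hcon
    push_neg at hcon
    have hsub2 : D.filter (fun e => y ∈ e) ⊆ {s(y, x')} := by
      intro e hef
      rw [Finset.mem_filter] at hef
      rw [Finset.mem_singleton]
      exact huniq _ (hcon e hef.1 hef.2) hef.2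
    have := Finset.card_le_card hsub2
    rw [Finset.card_singleton] at this
    rw [sdeg] at hd2
    omega
  obtain ⟨e, heD, hye, henq⟩ := hnew
  obtain ⟨z, rfl⟩ := Sym2.mem_iff_exists.mp hye
  have hadj : G'.Adj y z := hD_to_adj heD
  by_cases hz : z ∈ q.support
  · -- form a cycle
    have hq' : (q.dropUntil z hz).IsPath := hq.dropUntil hz
    have he' : s(y, z) ∉ (q.dropUntil z hz).edges := fun h =>
      henq (Walk.edges_dropUntil_subset q hz h)
    have hc : (Walk.cons hadj (q.dropUntil z hz)).IsCycle :=
      (Walk.cons_isCycle_iff _ hadj).mpr ⟨hq', he'⟩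
    set c := Walk.cons hadj (q.dropUntil z hz) with hcdef
    have hce : ∀ e ∈ c.edges, e ∈ D := fun e hec => hedges' _ (c.edges_subset_edgeSet hec)
    have hceG : ∀ e ∈ c.edges, e ∈ G.edgeSet := fun e hec => hsub (hce e hec)
    refine ⟨(c.transfer G hceG).edges.toFinset, ⟨y, c.transfer G hceG, hc.transfer _, rfl⟩, ?_⟩
    intro f hf
    rw [List.mem_toFinset, Walk.edges_transfer] at hf
    exact hce f hf
  · -- extend the path, contradiction
    exfalso
    have hqp : (Walk.cons hadj.symm q.reverse).IsPath := by
      rw [Walk.cons_isPath_iff]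
      refine ⟨hq.reverse, ?_⟩
      rw [Walk.support_reverse, List.mem_reverse]
      exact hz
    have : (n + 1) ∈ P :=
      ⟨x, z, (Walk.cons hadj.symm q.reverse).reverse, hqp.reverse, by
        rw [Walk.length_reverse, Walk.length_cons, Walk.length_reverse, hlen]⟩
    have := hmax _ this
    omega


lemma sdeg_symmDiff_parity (A B : Finset (Sym2 V)) (x : V) :
    sdeg x (A ∆ B) % 2 = (sdeg x A + sdeg x B) % 2 := by
  classical
  have hfilter : (A ∆ B).filter (fun e => x ∈ e)
      = (A.filter (fun e => x ∈ e)) ∆ (B.filter (fun e => x ∈ e)) := by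
    ext e
    simp only [Finset.mem_filter, Finset.mem_symmDiff]
    tauto
  set S := A.filter (fun e => x ∈ e)
  set T := B.filter (fun e => x ∈ e)
  have h1 : S ∆ T = (S ∪ T) \ (S ∩ T) := symmDiff_eq_sup_sdiff_inf S T
  have h2 : (S ∩ T) ⊆ (S ∪ T) := (Finset.inter_subset_left).trans Finset.subset_union_left
  have h3 : (S ∆ T).card = (S ∪ T).card - (S ∩ T).card := by
    rw [h1, Finset.card_sdiff_of_subset h2]
  have h4 : (S ∩ T).card + (S ∪ T).card = S.card + T.card :=
    Finset.card_inter_add_card_union S T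
  have h5 : (S ∩ T).card ≤ (S ∪ T).card := Finset.card_le_card h2
  rw [sdeg, sdeg, sdeg, hfilter, h3]
  have hS : #(filter (fun e => x ∈ e) A) = S.card := rfl
  have hT : #(filter (fun e => x ∈ e) B) = T.card := rfl
  rw [hS, hT]
  omega


lemma even_set_card_lt [Fintype V] {ℓ : ℕ}
    (hgirth : ∀ C : Finset (Sym2 V), IsCycleSet G C → ℓ < C.card)
    {D : Finset (Sym2 V)} (hD : (↑D : Set (Sym2 V)) ⊆ G.edgeSet) (hne : D.Nonempty)
    (heven : ∀ x, sdeg x D % 2 = 0) : ℓ < D.card := by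
  obtain ⟨C₀, hC₀, hsub⟩ := exists_cycleSet_subset_of_even hD hne heven
  exact lt_of_lt_of_le (hgirth C₀ hC₀) (Finset.card_le_card hsub)

lemma trail_edges_eq [Fintype V] {ℓ : ℕ}
    (hgirth : ∀ C : Finset (Sym2 V), IsCycleSet G C → ℓ < C.card)
    {x y : V} {w₁ w₂ : G.Walk x y}
    (h₁ : w₁.IsTrail) (h₂ : w₂.IsTrail) (hlen : w₁.length + w₂.length ≤ ℓ) :
    w₁.edges.toFinset = w₂.edges.toFinset := by
  by_contra hne
  set D := w₁.edges.toFinset ∆ w₂.edges.toFinset with hD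
  have hne' : D.Nonempty := by
    rw [Finset.nonempty_iff_ne_empty]
    intro h0
    exact hne (symmDiff_eq_bot.mp h0)
  have heven : ∀ v, sdeg v D % 2 = 0 := by
    intro v
    have e1 := trail_sdeg_parity h₁ v
    have e2 := trail_sdeg_parity h₂ v
    have e3 := sdeg_symmDiff_parity w₁.edges.toFinset w₂.edges.toFinset v
    rw [← hD] at e3
    omega
  have hsubG : (↑D : Set (Sym2 V)) ⊆ G.edgeSet := by
    intro e he
    rw [Finset.coe_symmDiff] at he
    rcases he with ⟨he, -⟩ | ⟨he, -⟩ <;>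
      [ exact w₁.edges_subset_edgeSet (List.mem_toFinset.mp he);
        exact w₂.edges_subset_edgeSet (List.mem_toFinset.mp he) ]
  have hcard : D.card ≤ ℓ := by
    have h3 : D ⊆ w₁.edges.toFinset ∪ w₂.edges.toFinset := by
      rw [hD, symmDiff_eq_sup_sdiff_inf]
      exact Finset.sdiff_subset
    calc D.card ≤ (w₁.edges.toFinset ∪ w₂.edges.toFinset).card := Finset.card_le_card h3
      _ ≤ w₁.edges.toFinset.card + w₂.edges.toFinset.card := Finset.card_union_le _ _
      _ ≤ w₁.edges.length + w₂.edges.length :=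
          Nat.add_le_add (List.toFinset_card_le _) (List.toFinset_card_le _)
      _ ≤ ℓ := by rw [Walk.length_edges, Walk.length_edges]; exact hlen
  exact absurd (even_set_card_lt hgirth hsubG hne' heven) (not_lt.mpr hcard)

lemma walk_split {u v : V} (w : G.Walk u v) : ∀ (n : ℕ), n ≤ w.length →
    ∃ (w₁ : G.Walk u (w.getVert n)) (w₂ : G.Walk (w.getVert n) v),
      w₁.length = n ∧ w₂.length = w.length - n ∧ w.edges = w₁.edges ++ w₂.edges ∧
      ∀ i, w₂.getVert i = w.getVert (n + i) := by
  induction w with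
  | @nil a =>
    intro n hn
    have : n = 0 := Nat.le_zero.mp hn
    subst this
    exact ⟨Walk.nil, Walk.nil, rfl, rfl, rfl, fun i => rfl⟩
  | @cons a b c h p ih =>
    intro n hn
    cases n with
    | zero => exact ⟨Walk.nil, Walk.cons h p, rfl, rfl, rfl, fun i => by rw [Nat.zero_add]; rfl⟩
    | succ n =>
      obtain ⟨p₁, p₂, h1, h2, h3, h4⟩ := ih n (by simpa [Walk.length_cons] using hn)
      refine ⟨Walk.cons h p₁, p₂, ?_, ?_, ?_, ?_⟩
      · simp [h1]
      · simpa using h2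
      · rw [Walk.edges_cons, h3]; rfl
      · intro i
        refine (h4 i).trans ?_
        have : n + 1 + i = (n + i) + 1 := by omega
        rw [this, Walk.getVert_cons_succ]

lemma isTrail_append_left {u v x : V} {w₁ : G.Walk u x} {w₂ : G.Walk x v}
    (hnd : (w₁.edges ++ w₂.edges).Nodup) : w₁.IsTrail ∧ w₂.IsTrail := by
  rw [List.nodup_append] at hnd
  exact ⟨(Walk.isTrail_def _).mpr hnd.1, (Walk.isTrail_def _).mpr hnd.2.1⟩

lemma trail_eq_of_breakpoints [Fintype V] {ℓ h : ℕ}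
    (hgirth : ∀ C : Finset (Sym2 V), IsCycleSet G C → ℓ < C.card)
    (hh : 1 ≤ h) (hhl : 2 * h ≤ ℓ) :
    ∀ (N : ℕ) (x y₁ y₂ : V) (w₁ : G.Walk x y₁) (w₂ : G.Walk x y₂),
      w₁.IsTrail → w₂.IsTrail → w₁.length = N → w₂.length = N →
      (∀ i : ℕ, w₁.getVert (min (i * h) N) = w₂.getVert (min (i * h) N)) →
      w₁.edges.toFinset = w₂.edges.toFinset := by
  intro N
  induction N using Nat.strong_induction_on with
  | _ N IH =>
  intro x y₁ y₂ w₁ w₂ ht₁ ht₂ hl₁ hl₂ hbp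
  by_cases hN : N ≤ h
  · -- single segment
    have hmin : min (N * h) N = N := min_eq_right (Nat.le_mul_of_pos_right N hh)
    have hy : y₁ = y₂ := by
      have hb := hbp N
      rw [hmin] at hb
      rw [← hl₁, Walk.getVert_length, hl₁, ← hl₂, Walk.getVert_length] at hb
      exact hb
    subst hy
    exact trail_edges_eq hgirth ht₁ ht₂ (by omega)
  · push_neg at hN
    have hhN : h ≤ N := hN.le
    obtain ⟨a₁, b₁, ha₁, hb₁, he₁, hg₁⟩ := walk_split w₁ h (by omega)
    obtain ⟨a₂, b₂, ha₂, hb₂, he₂, hg₂⟩ := walk_split w₂ h (by omega)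
    have hz : w₁.getVert h = w₂.getVert h := by
      have := hbp 1
      rwa [one_mul, min_eq_left hhN] at this
    -- trails of pieces
    have hnd₁ : (a₁.edges ++ b₁.edges).Nodup := he₁ ▸ ht₁.edges_nodup
    have hnd₂ : (a₂.edges ++ b₂.edges).Nodup := he₂ ▸ ht₂.edges_nodup
    obtain ⟨hta₁, htb₁⟩ := isTrail_append_left hnd₁
    obtain ⟨hta₂, htb₂⟩ := isTrail_append_left hnd₂
    -- first blocks equal
    set a₂' := a₂.copy rfl hz.symm with ha₂'def
    have hta₂' : a₂'.IsTrail := by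
      rw [Walk.isTrail_def, ha₂'def, Walk.edges_copy]
      exact hta₂.edges_nodup
    have hEa : a₁.edges.toFinset = a₂.edges.toFinset := by
      have : a₁.edges.toFinset = a₂'.edges.toFinset := by
        refine trail_edges_eq hgirth hta₁ hta₂' ?_
        rw [ha₁]
        rw [ha₂'def, Walk.length_copy, ha₂]
        omega
      rwa [ha₂'def, Walk.edges_copy] at this
    -- second blocks equal via IH
    set b₂' := b₂.copy hz.symm rfl with hb₂'def
    have htb₂' : b₂'.IsTrail := by
      rw [Walk.isTrail_def, hb₂'def, Walk.edges_copy]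
      exact htb₂.edges_nodup
    have hEb : b₁.edges.toFinset = b₂.edges.toFinset := by
      have hlt : N - h < N := by omega
      have := IH (N - h) hlt (w₁.getVert h) y₁ y₂ b₁ b₂' htb₁ htb₂'
        (by rw [hb₁, hl₁]) (by rw [hb₂'def, Walk.length_copy, hb₂, hl₂]) ?_
      · rwa [hb₂'def, Walk.edges_copy] at this
      · intro i
        have hexp : (i + 1) * h = i * h + h := by ring
        have key : h + min (i * h) (N - h) = min ((i + 1) * h) N := by
          rw [hexp]; omega
        rw [hb₂'def, Walk.getVert_copy, hg₁, hg₂, key]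
        exact hbp (i + 1)
    have f1 : w₁.edges.toFinset = a₁.edges.toFinset ∪ b₁.edges.toFinset := by
      rw [he₁, List.toFinset_append]
    have f2 : w₂.edges.toFinset = a₂.edges.toFinset ∪ b₂.edges.toFinset := by
      rw [he₂, List.toFinset_append]
    rw [f1, f2, hEa, hEb]


lemma bcard_le [Fintype V] [DecidableRel G.Adj] :
    (Finset.univ.filter (fun v => 0 < G.degree v)).card ≤ 2 * G.edgeFinset.card := by
  calc (Finset.univ.filter (fun v => 0 < G.degree v)).card
      = ∑ _v ∈ Finset.univ.filter (fun v => 0 < G.degree v), 1 := by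
        rw [Finset.sum_const, smul_eq_mul, mul_one]
    _ ≤ ∑ v ∈ Finset.univ.filter (fun v => 0 < G.degree v), G.degree v :=
        Finset.sum_le_sum (fun v hv => (Finset.mem_filter.mp hv).2)
    _ ≤ ∑ v, G.degree v := Finset.sum_le_sum_of_subset (Finset.subset_univ _)
    _ = 2 * G.edgeFinset.card := G.sum_degrees_eq_twice_card_edges

lemma cycleSet_count [Fintype V] [DecidableRel G.Adj] {ℓ h : ℕ}
    (hgirth : ∀ C : Finset (Sym2 V), IsCycleSet G C → ℓ < C.card)
    (hh : 1 ≤ h) (hhl : 2 * h ≤ ℓ) (t : ℕ) (ht : 0 < t)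
    (𝒞 : Finset (Finset (Sym2 V)))
    (h𝒞 : ∀ D ∈ 𝒞, IsCycleSet G D ∧ D.card = t) :
    𝒞.card ≤ (Finset.univ.filter (fun v => 0 < G.degree v)).card ^ (t / h + 2) := by
  classical
  rcases Finset.eq_empty_or_nonempty 𝒞 with hemp | ⟨D0, hD0⟩
  · simp [hemp]
  have hVne : Nonempty V := ⟨(h𝒞 D0 hD0).1.choose⟩
  inhabit V
  set B := Finset.univ.filter (fun v => 0 < G.degree v) with hB
  set r := t / h + 2 with hr
  have hr0 : 0 < r := by rw [hr]; positivity
  have hwlen : ∀ D ∈ 𝒞, ∀ (u : V) (w : G.Walk u u),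
      w.IsCycle → D = w.edges.toFinset → w.length = t := by
    intro D hD u w hcyc hDe
    have := (h𝒞 D hD).2
    rw [hDe, List.toFinset_card_of_nodup hcyc.isTrail.edges_nodup, Walk.length_edges] at this
    exact this
  set f : Finset (Sym2 V) → (Fin r → V) := fun D =>
    if hD : IsCycleSet G D then
      (fun i => (hD.choose_spec.choose).getVert (min (i.1 * h) t))
    else fun _ => default with hf
  have hrh : t < r * h := by
    have h1 : t % h < h := Nat.mod_lt t hh
    have h2 : h * (t / h) + t % h = t := Nat.div_add_mod t h
    have h3 : r * h = h * (t / h) + 2 * h := by rw [hr]; ring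
    omega
  have hcard : 𝒞.card ≤ (Fintype.piFinset (fun _ : Fin r => B)).card := by
    apply Finset.card_le_card_of_injOn f
    · -- maps to
      intro D hD
      have hDc : IsCycleSet G D := (h𝒞 D hD).1
      rw [Finset.mem_coe, Fintype.mem_piFinset]
      intro i
      rw [hf]
      simp only [dif_pos hDc]
      set u := hDc.choose
      set w := hDc.choose_spec.choose
      obtain ⟨hcyc, hDe⟩ := hDc.choose_spec.choose_spec
      have hlen : w.length = t := hwlen D hD u w hcyc hDe
      rw [hB, Finset.mem_filter]
      refine ⟨Finset.mem_univ _, ?_⟩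
      rw [G.degree_pos_iff_exists_adj]
      rcases lt_or_eq_of_le (min_le_right (i.1 * h) t) with hlt | heq
      · exact ⟨_, w.adj_getVert_succ (by omega)⟩
      · rw [heq, ← hlen, Walk.getVert_length]
        have h3 : 3 ≤ w.length := hcyc.three_le_length
        have h0 : w.getVert 0 = u := w.getVert_zero
        exact ⟨_, h0 ▸ w.adj_getVert_succ (by omega)⟩
    · -- injective
      intro D₁ hD₁ D₂ hD₂ hfeq
      rw [Finset.mem_coe] at hD₁ hD₂
      have hDc₁ : IsCycleSet G D₁ := (h𝒞 D₁ hD₁).1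
      have hDc₂ : IsCycleSet G D₂ := (h𝒞 D₂ hD₂).1
      rw [hf] at hfeq
      simp only [dif_pos hDc₁, dif_pos hDc₂] at hfeq
      set u₁ := hDc₁.choose with hu₁
      set w₁ := hDc₁.choose_spec.choose with hw₁
      obtain ⟨hcyc₁, hDe₁⟩ := hDc₁.choose_spec.choose_spec
      set u₂ := hDc₂.choose with hu₂
      set w₂ := hDc₂.choose_spec.choose with hw₂
      obtain ⟨hcyc₂, hDe₂⟩ := hDc₂.choose_spec.choose_spec
      have hlen₁ : w₁.length = t := hwlen D₁ hD₁ u₁ w₁ hcyc₁ hDe₁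
      have hlen₂ : w₂.length = t := hwlen D₂ hD₂ u₂ w₂ hcyc₂ hDe₂
      have heq : ∀ i : ℕ, w₁.getVert (min (i * h) t) = w₂.getVert (min (i * h) t) := by
        intro i
        rcases lt_or_ge i r with hir | hir
        · exact congrFun hfeq ⟨i, hir⟩
        · have h1 : r * h ≤ i * h := Nat.mul_le_mul_right h hir
          have hti : t ≤ i * h := le_trans (le_of_lt hrh) h1
          have hmin : min (i * h) t = t := min_eq_right hti
          rw [hmin, ← hlen₁, Walk.getVert_length, hlen₁, ← hlen₂, Walk.getVert_length]
          have e1 := congrFun hfeq ⟨0, hr0⟩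
          simpa [Nat.zero_mul, Walk.getVert_zero] using e1
      have hueq : u₁ = u₂ := by
        have e1 := congrFun hfeq ⟨0, hr0⟩
        simpa [Nat.zero_mul, Walk.getVert_zero] using e1
      have hfin : w₁.edges.toFinset = (w₂.copy hueq.symm hueq.symm).edges.toFinset := by
        apply trail_eq_of_breakpoints hgirth hh hhl t u₁ u₁ u₁ w₁ (w₂.copy hueq.symm hueq.symm)
          hcyc₁.isTrail
        · rw [Walk.isTrail_def, Walk.edges_copy]
          exact hcyc₂.isTrail.edges_nodup
        · exact hlen₁
        · rw [Walk.length_copy]; exact hlen₂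
        · intro i
          rw [Walk.getVert_copy]
          exact heq i
      rw [hDe₁, hDe₂, ← Walk.edges_copy w₂ hueq.symm hueq.symm]
      exact hfin
  calc 𝒞.card ≤ (Fintype.piFinset (fun _ : Fin r => B)).card := hcard
    _ = B.card ^ r := by rw [Fintype.card_piFinset]; simp


end helpers

section bern
variable {α : Type*} [DecidableEq α]

lemma bern_sum_one (F : Finset α) (p : ℝ) :
    ∑ T ∈ F.powerset, p ^ T.card * (1 - p) ^ (F.card - T.card) = 1 := by
  have h := Finset.prod_add (fun _ : α => p) (fun _ : α => 1 - p) F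
  have h1 : (∏ _i ∈ F, (p + (1 - p))) = 1 := by simp
  rw [h1] at h
  have h2 : ∑ T ∈ F.powerset, p ^ T.card * (1 - p) ^ (F.card - T.card)
      = ∑ t ∈ F.powerset, (∏ _i ∈ t, p) * ∏ _i ∈ F \ t, (1 - p) := by
    apply Finset.sum_congr rfl
    intro T hT
    have hsub : T ⊆ F := Finset.mem_powerset.mp hT
    rw [Finset.prod_const, Finset.prod_const, Finset.card_sdiff_of_subset hsub]
  rw [h2, ← h]

lemma bern_sum_supset (E D : Finset α) (hD : D ⊆ E) (p : ℝ) :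
    ∑ S ∈ E.powerset, (if D ⊆ S then p ^ S.card * (1 - p) ^ (E.card - S.card) else 0)
      = p ^ D.card := by
  classical
  rw [← Finset.sum_filter]
  have hbij : ∑ S ∈ E.powerset.filter (fun S => D ⊆ S),
        p ^ S.card * (1 - p) ^ (E.card - S.card)
      = ∑ T ∈ (E \ D).powerset, p ^ (T ∪ D).card * (1 - p) ^ (E.card - (T ∪ D).card) := by
    apply Finset.sum_nbij' (fun S => S \ D) (fun T => T ∪ D)
    · intro S hS
      rw [Finset.mem_filter, Finset.mem_powerset] at hS
      rw [Finset.mem_powerset]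
      exact Finset.sdiff_subset_sdiff hS.1 le_rfl
    · intro T hT
      rw [Finset.mem_powerset] at hT
      rw [Finset.mem_filter, Finset.mem_powerset]
      constructor
      · exact Finset.union_subset (hT.trans (Finset.sdiff_subset)) hD
      · exact Finset.subset_union_right
    · intro S hS
      rw [Finset.mem_filter] at hS
      rw [Finset.sdiff_union_self_eq_union]
      exact (Finset.union_eq_left.mpr hS.2)
    · intro T hT
      rw [Finset.mem_powerset] at hT
      have hdisj : Disjoint T D := Finset.disjoint_of_subset_left hT Finset.sdiff_disjoint
      rw [Finset.union_sdiff_cancel_right hdisj]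
    · intro S hS
      rw [Finset.mem_filter] at hS
      rw [Finset.sdiff_union_self_eq_union, Finset.union_eq_left.mpr hS.2]
  rw [hbij]
  have hstep : ∀ T ∈ (E \ D).powerset,
      p ^ (T ∪ D).card * (1 - p) ^ (E.card - (T ∪ D).card)
        = p ^ D.card * (p ^ T.card * (1 - p) ^ ((E \ D).card - T.card)) := by
    intro T hT
    rw [Finset.mem_powerset] at hT
    have hdisj : Disjoint T D := Finset.disjoint_of_subset_left hT Finset.sdiff_disjoint
    have hcard : (T ∪ D).card = T.card + D.card := Finset.card_union_of_disjoint hdisj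
    have hTE : T.card ≤ (E \ D).card := Finset.card_le_card hT
    have hDE : D.card ≤ E.card := Finset.card_le_card hD
    have hED : (E \ D).card = E.card - D.card := Finset.card_sdiff_of_subset hD
    have hexp : E.card - (T.card + D.card) = (E \ D).card - T.card := by
      rw [hED]; omega
    rw [hcard, hexp, pow_add]
    ring
  rw [Finset.sum_congr rfl hstep, ← Finset.mul_sum, bern_sum_one, mul_one]

end bern

lemma keynum (m ℓ h t : ℕ) (p : ℝ) (hm : 2 ≤ m) (hp0 : 0 ≤ p)
    (hpl : p ^ ℓ = 1 / (m : ℝ) ^ 100) (hl : 100 ≤ ℓ) (hhdef : h = ℓ / 2) (ht : ℓ < t) :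
    (2 * (m : ℝ)) ^ (t / h + 2) * p ^ ((99 * t + 199) / 200) ≤ 1 / (m : ℝ) ^ 41 := by
  have hm0 : (0:ℝ) < m := by exact_mod_cast (by omega : 0 < m)
  have hm1 : (1:ℝ) ≤ m := by exact_mod_cast (by omega : 1 ≤ m)
  have hm2 : (2:ℝ) ≤ m := by exact_mod_cast hm
  have hl0 : ℓ ≠ 0 := by omega
  set q := t / h + 2 with hq
  set jm := (99 * t + 199) / 200 with hjm
  -- nat exponent inequality
  have hnat : 2 * (q * ℓ) + 41 * ℓ ≤ 100 * jm := by
    have hh50 : 50 ≤ h := by omega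
    have hd : (t / h) * h ≤ t := Nat.div_mul_le_self t h
    have hdl : (t / h) * ℓ ≤ 2 * ((t / h) * h) + (t / h) := by
      calc (t / h) * ℓ ≤ (t / h) * (2 * h + 1) := Nat.mul_le_mul_left _ (by omega)
        _ = 2 * ((t / h) * h) + (t / h) := by ring
    have hd50 : (t / h) * 50 ≤ (t / h) * h := Nat.mul_le_mul_left _ hh50
    have hqexp : q * ℓ = (t / h) * ℓ + 2 * ℓ := by rw [hq]; ring
    omega
  apply le_of_pow_le_pow_left₀ hl0 (by positivity)
  have e1 : ((2 * (m:ℝ)) ^ q * p ^ jm) ^ ℓ = (2 * (m:ℝ)) ^ (q * ℓ) * ((1 : ℝ) / m ^ 100) ^ jm := by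
    rw [mul_pow, ← pow_mul, ← pow_mul, mul_comm jm ℓ, pow_mul p ℓ jm, hpl]
  rw [e1, div_pow, one_pow, div_pow, one_pow, ← pow_mul, ← pow_mul, mul_one_div,
    div_le_div_iff₀ (by positivity) (by positivity), one_mul]
  calc (2 * (m:ℝ)) ^ (q * ℓ) * (m:ℝ) ^ (41 * ℓ)
      ≤ ((m:ℝ) ^ 2) ^ (q * ℓ) * (m:ℝ) ^ (41 * ℓ) := by
        apply mul_le_mul_of_nonneg_right _ (by positivity)
        exact pow_le_pow_left₀ (by positivity) (by nlinarith) _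
    _ = (m:ℝ) ^ (2 * (q * ℓ) + 41 * ℓ) := by rw [← pow_mul, ← pow_add]
    _ ≤ (m:ℝ) ^ (100 * jm) := pow_le_pow_right₀ hm1 hnat


lemma pk_lower (m ℓ k : ℕ) (p : ℝ) (hm : 2 ≤ m) (hp0 : 0 ≤ p)
    (hpl : p ^ ℓ = 1 / (m : ℝ) ^ 100) (hl : 100 ≤ ℓ) (hk : 100 * k ≤ 101 * ℓ) :
    1 / (m : ℝ) ^ 101 ≤ p ^ k := by
  have hm0 : (0:ℝ) < m := by exact_mod_cast (by omega : 0 < m)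
  have hm1 : (1:ℝ) ≤ m := by exact_mod_cast (by omega : 1 ≤ m)
  have hl0 : ℓ ≠ 0 := by omega
  apply le_of_pow_le_pow_left₀ hl0 (pow_nonneg hp0 _)
  have e1 : (p ^ k) ^ ℓ = ((1:ℝ) / m ^ 100) ^ k := by
    rw [← pow_mul, mul_comm k ℓ, pow_mul p ℓ k, hpl]
  rw [e1, div_pow, one_pow, div_pow, one_pow, ← pow_mul, ← pow_mul,
    div_le_div_iff₀ (by positivity) (by positivity), one_mul, one_mul]
  exact pow_le_pow_right₀ hm1 (by omega)

theorem unique_cycle_survival_prob {V : Type*} [Fintype V] [DecidableEq V]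
    (G : SimpleGraph V) [DecidableRel G.Adj] (m ℓ : ℕ) (hm : 2 ≤ m)
    (hedges : G.edgeFinset.card = m)
    (hgirth : ∀ C : Finset (Sym2 V), IsCycleSet G C → ℓ < C.card)
    (p : ℝ) (hp0 : 0 ≤ p) (hp1 : p ≤ 1) (hpl : p ^ ℓ = 1 / (m : ℝ) ^ 100)
    (C : Finset (Sym2 V)) (hC : IsCycleSet G C)
    (hk1 : ℓ < C.card) (hk2 : (C.card : ℝ) ≤ 1.01 * ℓ) :
    1 / (2 * (m : ℝ) ^ 101) ≤
      bernoulliSubsetProb G.edgeFinset p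
        {E' | C ⊆ E' ∧ ∀ C' : Finset (Sym2 V), IsCycleSet G C' → C' ≠ C → ¬ C' ⊆ E'} := by
  classical
  set k := C.card with hkdef
  have hcycsub : ∀ D : Finset (Sym2 V), IsCycleSet G D → D ⊆ G.edgeFinset := by
    rintro D ⟨u, w, hcyc, rfl⟩ e he
    rw [mem_edgeFinset]
    exact w.edges_subset_edgeSet (List.mem_toFinset.mp he)
  have hCsubE : C ⊆ G.edgeFinset := hcycsub C hC
  have hkm : k ≤ m := by rw [← hedges]; exact card_le_card hCsubE
  have hk100 : 100 * k ≤ 101 * ℓ := by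
    have h1 : ((100 * k : ℕ) : ℝ) ≤ ((101 * ℓ : ℕ) : ℝ) := by push_cast; nlinarith [hk2]
    exact_mod_cast h1
  have hl100 : 100 ≤ ℓ := by omega
  set h := ℓ / 2 with hhdef
  have hh1 : 1 ≤ h := by omega
  have hhl : 2 * h ≤ ℓ := by omega
  have hq0 : 0 ≤ 1 - p := by linarith
  have hm0 : (0:ℝ) < m := by exact_mod_cast (by omega : 0 < m)
  have hevenC : ∀ D : Finset (Sym2 V), IsCycleSet G D → ∀ x, sdeg x D % 2 = 0 := by
    rintro D ⟨u, w, hcyc, rfl⟩ x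
    have hpar := trail_sdeg_parity hcyc.isTrail x
    by_cases hx : x = u
    · rw [if_pos hx] at hpar; omega
    · rw [if_neg hx] at hpar; omega
  set A : Set (Finset (Sym2 V)) :=
    {E' | C ⊆ E' ∧ ∀ C' : Finset (Sym2 V), IsCycleSet G C' → C' ≠ C → ¬ C' ⊆ E'} with hA
  set W : Finset (Sym2 V) → ℝ :=
    fun S => p ^ S.card * (1 - p) ^ (G.edgeFinset.card - S.card) with hW
  have hW0 : ∀ S, 0 ≤ W S := fun S => mul_nonneg (pow_nonneg hp0 _) (pow_nonneg hq0 _)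
  set 𝒟 := (G.edgeFinset.powerset.filter (fun D => IsCycleSet G D)).erase C with h𝒟
  have h𝒟mem : ∀ C' ∈ 𝒟, IsCycleSet G C' ∧ C' ≠ C := by
    intro C' hC'
    rw [h𝒟, mem_erase, mem_filter] at hC'
    exact ⟨hC'.2.2, hC'.1⟩
  -- Step I: union bound
  have hstep1 : p ^ k - ∑ C' ∈ 𝒟, p ^ ((C ∪ C').card)
      ≤ bernoulliSubsetProb G.edgeFinset p A := by
    have hPdef : bernoulliSubsetProb G.edgeFinset p A
        = ∑ S ∈ G.edgeFinset.powerset, Set.indicator A W S := rfl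
    have hpoint : ∀ S ∈ G.edgeFinset.powerset,
        (if C ⊆ S then W S else 0) - ∑ C' ∈ 𝒟, (if C ∪ C' ⊆ S then W S else 0)
          ≤ Set.indicator A W S := by
      intro S _
      have hite : ∀ C' ∈ 𝒟, (0:ℝ) ≤ (if C ∪ C' ⊆ S then W S else 0) := by
        intro C' _
        split_ifs
        · exact hW0 S
        · exact le_refl 0
      have hsumnn : (0:ℝ) ≤ ∑ C' ∈ 𝒟, (if C ∪ C' ⊆ S then W S else 0) :=
        Finset.sum_nonneg hite
      have hindnn : (0:ℝ) ≤ Set.indicator A W S :=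
        Set.indicator_nonneg (fun S _ => hW0 S) S
      by_cases hCS : C ⊆ S
      · by_cases hA' : S ∈ A
        · rw [Set.indicator_of_mem hA', if_pos hCS]; linarith
        · rw [Set.indicator_of_notMem hA', if_pos hCS]
          have hex : ∃ C' ∈ 𝒟, C ∪ C' ⊆ S := by
            rw [hA, Set.mem_setOf_eq] at hA'
            push_neg at hA'
            obtain ⟨C', hcyc', hne', hsub'⟩ := hA' hCS
            refine ⟨C', ?_, union_subset hCS hsub'⟩
            rw [h𝒟, mem_erase, mem_filter, mem_powerset]
            exact ⟨hne', hcycsub C' hcyc', hcyc'⟩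
          obtain ⟨C', hC'mem, hCC'S⟩ := hex
          have hge : W S ≤ ∑ C'' ∈ 𝒟, (if C ∪ C'' ⊆ S then W S else 0) := by
            have hs := Finset.single_le_sum
              (f := fun C'' => if C ∪ C'' ⊆ S then W S else 0) hite hC'mem
            simp only [if_pos hCC'S] at hs
            exact hs
          linarith
      · rw [if_neg hCS]; linarith
    have hsum := Finset.sum_le_sum hpoint
    rw [Finset.sum_sub_distrib] at hsum
    have hfirst : ∑ S ∈ G.edgeFinset.powerset, (if C ⊆ S then W S else 0) = p ^ k :=
      bern_sum_supset G.edgeFinset C hCsubE p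
    have hswap : ∑ S ∈ G.edgeFinset.powerset, ∑ C' ∈ 𝒟, (if C ∪ C' ⊆ S then W S else 0)
        = ∑ C' ∈ 𝒟, p ^ ((C ∪ C').card) := by
      rw [Finset.sum_comm]
      apply Finset.sum_congr rfl
      intro C' hC'
      exact bern_sum_supset G.edgeFinset (C ∪ C')
        (union_subset hCsubE (hcycsub C' (h𝒟mem C' hC').1)) p
    rw [hfirst, hswap] at hsum
    rw [hPdef]
    exact hsum
  -- Step II: per-cycle bound
  have hstep2 : ∀ C' ∈ 𝒟, p ^ ((C ∪ C').card)
      ≤ p ^ k * p ^ ((99 * C'.card + 199) / 200) := by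
    intro C' hC'
    obtain ⟨hcyc', hne'⟩ := h𝒟mem C' hC'
    have hC'E := hcycsub C' hcyc'
    have ht : ℓ < C'.card := hgirth C' hcyc'
    have hΔ : ℓ < (C ∆ C').card := by
      apply even_set_card_lt hgirth
      · intro e he
        rw [Finset.mem_coe, Finset.mem_symmDiff] at he
        rcases he with ⟨he, -⟩ | ⟨he, -⟩
        · exact mem_edgeFinset.mp (hCsubE he)
        · exact mem_edgeFinset.mp (hC'E he)
      · rw [Finset.nonempty_iff_ne_empty]
        intro h0
        rw [← Finset.bot_eq_empty] at h0
        exact hne' (symmDiff_eq_bot.mp h0).symm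
      · intro x
        have e1 := hevenC C hC x
        have e2 := hevenC C' hcyc' x
        have e3 := sdeg_symmDiff_parity C C' x
        omega
    have hcards1 : (C' \ C).card + (C' ∩ C).card = C'.card := card_sdiff_add_card_inter C' C
    have hcards2 : (C \ C').card + (C ∩ C').card = k := card_sdiff_add_card_inter C C'
    have hinter : (C ∩ C').card = (C' ∩ C).card := by rw [inter_comm]
    have hΔcard : (C ∆ C').card = (C \ C').card + (C' \ C).card := by
      rw [symmDiff_def, Finset.sup_eq_union,
        card_union_of_disjoint disjoint_sdiff_sdiff]
    have hjlow : (99 * C'.card + 199) / 200 ≤ (C' \ C).card := by omega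
    have hucard : (C ∪ C').card = k + (C' \ C).card := by
      rw [← Finset.union_sdiff_self_eq_union,
        card_union_of_disjoint Finset.disjoint_sdiff]
    rw [hucard, pow_add]
    exact mul_le_mul_of_nonneg_left (pow_le_pow_of_le_one hp0 hp1 hjlow) (pow_nonneg hp0 k)
  -- Step III: grouped counting bound
  have hstep3 : ∑ C' ∈ 𝒟, p ^ ((99 * C'.card + 199) / 200) ≤ ((m:ℝ) + 1) / m ^ 41 := by
    have hcomp := Finset.sum_comp (fun t : ℕ => p ^ ((99 * t + 199) / 200))
      (fun D : Finset (Sym2 V) => D.card) (s := 𝒟)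
    rw [hcomp]
    have hbound : ∀ t ∈ 𝒟.image (fun D => D.card),
        ((𝒟.filter (fun D => D.card = t)).card) • p ^ ((99 * t + 199) / 200)
          ≤ 1 / (m:ℝ) ^ 41 := by
      intro t htmem
      obtain ⟨C0, hC0mem, hC0card⟩ := Finset.mem_image.mp htmem
      have htl : ℓ < t := hC0card ▸ hgirth C0 (h𝒟mem C0 hC0mem).1
      have hcount : (𝒟.filter (fun D => D.card = t)).card
          ≤ (Finset.univ.filter (fun v => 0 < G.degree v)).card ^ (t / h + 2) := by
        apply cycleSet_count hgirth hh1 hhl t (by omega)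
        intro D hD
        rw [Finset.mem_filter] at hD
        exact ⟨(h𝒟mem D hD.1).1, hD.2⟩
      have hcount2 : (𝒟.filter (fun D => D.card = t)).card ≤ (2 * m) ^ (t / h + 2) := by
        refine hcount.trans (Nat.pow_le_pow_left ?_ _)
        rw [← hedges]
        exact bcard_le
      have hppos : (0:ℝ) ≤ p ^ ((99 * t + 199) / 200) := pow_nonneg hp0 _
      rw [nsmul_eq_mul]
      calc ((𝒟.filter (fun D => D.card = t)).card : ℝ) * p ^ ((99 * t + 199) / 200)
          ≤ ((2 * m) ^ (t / h + 2) : ℕ) * p ^ ((99 * t + 199) / 200) := by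
            apply mul_le_mul_of_nonneg_right _ hppos
            exact_mod_cast hcount2
        _ = (2 * (m:ℝ)) ^ (t / h + 2) * p ^ ((99 * t + 199) / 200) := by push_cast; ring
        _ ≤ 1 / (m:ℝ) ^ 41 := keynum m ℓ h t p hm hp0 hpl hl100 hhdef htl
    calc ∑ t ∈ 𝒟.image (fun D => D.card),
          ((𝒟.filter (fun D => D.card = t)).card) • p ^ ((99 * t + 199) / 200)
        ≤ ∑ _t ∈ 𝒟.image (fun D => D.card), 1 / (m:ℝ) ^ 41 := Finset.sum_le_sum hbound
      _ = ((𝒟.image (fun D => D.card)).card : ℝ) * (1 / m ^ 41) := by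
          rw [Finset.sum_const, nsmul_eq_mul]
      _ ≤ ((m:ℝ) + 1) * (1 / m ^ 41) := by
          apply mul_le_mul_of_nonneg_right _ (by positivity)
          have hsub : 𝒟.image (fun D => D.card) ⊆ Finset.range (m + 1) := by
            intro t htm
            obtain ⟨C0, hC0mem, hC0card⟩ := Finset.mem_image.mp htm
            rw [Finset.mem_range]
            have : C0.card ≤ m := by
              rw [← hedges]
              exact card_le_card (hcycsub C0 (h𝒟mem C0 hC0mem).1)
            omega
          have := Finset.card_le_card hsub
          rw [Finset.card_range] at this
          exact_mod_cast this
      _ = ((m:ℝ) + 1) / m ^ 41 := by ring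
  -- combine
  have hsum_le : ∑ C' ∈ 𝒟, p ^ ((C ∪ C').card) ≤ p ^ k * (((m:ℝ) + 1) / m ^ 41) := by
    calc ∑ C' ∈ 𝒟, p ^ ((C ∪ C').card)
        ≤ ∑ C' ∈ 𝒟, p ^ k * p ^ ((99 * C'.card + 199) / 200) := Finset.sum_le_sum hstep2
      _ = p ^ k * ∑ C' ∈ 𝒟, p ^ ((99 * C'.card + 199) / 200) := by rw [Finset.mul_sum]
      _ ≤ p ^ k * (((m:ℝ) + 1) / m ^ 41) :=
          mul_le_mul_of_nonneg_left hstep3 (pow_nonneg hp0 k)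
  have hpk : 1 / (m:ℝ) ^ 101 ≤ p ^ k := pk_lower m ℓ k p hm hp0 hpl hl100 hk100
  have hm2 : (2:ℝ) ≤ m := by exact_mod_cast hm
  have hhalf : ((m:ℝ) + 1) / m ^ 41 ≤ 1 / 2 := by
    rw [div_le_div_iff₀ (by positivity) (by norm_num)]
    have h40 : (2:ℝ) ^ 40 ≤ (m:ℝ) ^ 40 := pow_le_pow_left₀ (by norm_num) hm2 40
    have h41 : (m:ℝ) ^ 41 = m ^ 40 * m := by ring
    nlinarith [h40, hm2]
  have hpknn : (0:ℝ) ≤ p ^ k := pow_nonneg hp0 k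
  calc 1 / (2 * (m:ℝ) ^ 101) = (1 / m ^ 101) * (1 / 2) := by ring
    _ ≤ p ^ k * (1 / 2) := mul_le_mul_of_nonneg_right hpk (by norm_num)
    _ ≤ p ^ k - p ^ k * (((m:ℝ) + 1) / m ^ 41) := by nlinarith [hpknn, hhalf]
    _ ≤ p ^ k - ∑ C' ∈ 𝒟, p ^ ((C ∪ C').card) := by linarith [hsum_le]
    _ ≤ bernoulliSubsetProb G.edgeFinset p A := hstep1
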